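/- Let 𝒩 be an ε-randomizing random unitary channel on dimension d with n unitaries, where 0 < ε < 1, and suppose n < d^(2-2/p)/(1+ε)^(2-2/p) for some p > 2. Then the maximal output p-norm is strictly supermultiplicative: ν_p(𝒩)·ν_p(𝒩̄) ≤ ((1+ε)/d)^(2-2/p) < 1/n ≤ ν_p(𝒩 ⊗ 𝒩̄). -/

import Mathlib

open scoped BigOperators Kronecker ComplexOrder Matrix

/-- Schatten p-norm of a Hermitian matrix, via its eigenvalues. -/
noncomputable def schattenNorm {ι : Type*} [Fintype ι] [DecidableEq ι]
    (p : ℝ) (M : Matrix ι ι ℂ) : ℝ :=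
  if h : M.IsHermitian then (∑ i, |h.eigenvalues i| ^ p) ^ (1 / p) else 0

/-- A density operator: positive semidefinite with unit trace. -/
def IsDensity {ι : Type*} [Fintype ι] [DecidableEq ι] (ρ : Matrix ι ι ℂ) : Prop :=
  ρ.PosSemidef ∧ ρ.trace = 1

/-- Maximal output p-norm ν_p of a channel. -/
noncomputable def maxOutputPNorm {ι κ : Type*} [Fintype ι] [DecidableEq ι]
    [Fintype κ] [DecidableEq κ] (p : ℝ) (N : Matrix ι ι ℂ → Matrix κ κ ℂ) : ℝ :=
  sSup { x | ∃ ρ, IsDensity ρ ∧ x = schattenNorm p (N ρ) }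

namespace EpsRandAux

variable {ι : Type*} [Fintype ι] [DecidableEq ι]

lemma trace_eq_sum_eigenvalues {A : Matrix ι ι ℂ} (hA : A.IsHermitian) :
    A.trace = ∑ i, (hA.eigenvalues i : ℂ) := by
  nth_rewrite 1 [hA.spectral_theorem]
  rw [Unitary.conjStarAlgAut_apply, Matrix.trace_mul_cycle, Unitary.coe_star_mul_self, one_mul, Matrix.trace_diagonal]
  rfl

lemma sum_eigenvalues_eq_one {A : Matrix ι ι ℂ} (hA : A.IsHermitian) (h1 : A.trace = 1) :
    ∑ i, hA.eigenvalues i = 1 := by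
  have := trace_eq_sum_eigenvalues hA
  rw [h1, ← Complex.ofReal_sum] at this
  exact_mod_cast this.symm

lemma eigenvalues_le_of_posSemidef {A : Matrix ι ι ℂ} (hA : A.IsHermitian) {c : ℝ}
    (h : ((c : ℂ) • (1 : Matrix ι ι ℂ) - A).PosSemidef) (i : ι) : hA.eigenvalues i ≤ c := by
  have h2 := h.re_dotProduct_nonneg ⇑(hA.eigenvectorBasis i)
  have hv : dotProduct (star ⇑(hA.eigenvectorBasis i)) ⇑(hA.eigenvectorBasis i) = 1 := by
    have := hA.eigenvectorBasis.orthonormal.1 i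
    rw [dotProduct_comm, ← EuclideanSpace.inner_eq_star_dotProduct]
    rw [@inner_self_eq_norm_sq_to_K ℂ] at *
    rw [this]; norm_num
  rw [Matrix.sub_mulVec, dotProduct_sub, map_sub, Matrix.smul_mulVec,
    Matrix.one_mulVec, dotProduct_smul, smul_eq_mul, hv, mul_one] at h2
  rw [hA.eigenvalues_eq i]
  have : Complex.re (c : ℂ) = c := by simp
  simp only [RCLike.re_to_complex] at *
  linarith

lemma smul_one_sub_posSemidef {A : Matrix ι ι ℂ} (hA : A.IsHermitian) {c : ℝ}
    (h : ∀ i, hA.eigenvalues i ≤ c) : ((c : ℂ) • (1 : Matrix ι ι ℂ) - A).PosSemidef := by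
  have hU : ((c : ℂ) • (1 : Matrix ι ι ℂ) - A) =
      (hA.eigenvectorUnitary : Matrix ι ι ℂ) *
        ((c : ℂ) • (1 : Matrix ι ι ℂ) - Matrix.diagonal (RCLike.ofReal ∘ hA.eigenvalues)) *
        (star hA.eigenvectorUnitary : Matrix ι ι ℂ) := by
    rw [Matrix.mul_sub, Matrix.sub_mul]
    congr 1
    · have h1 : (hA.eigenvectorUnitary : Matrix ι ι ℂ) *
          star (hA.eigenvectorUnitary : Matrix ι ι ℂ) = 1 :=
        Matrix.mem_unitaryGroup_iff.mp hA.eigenvectorUnitary.2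
      rw [Matrix.mul_smul, mul_one, Matrix.smul_mul, h1]
    · exact hA.spectral_theorem
  rw [hU]
  have hD : ((c : ℂ) • (1 : Matrix ι ι ℂ) - Matrix.diagonal (RCLike.ofReal ∘ hA.eigenvalues)) =
      Matrix.diagonal (fun i => (c : ℂ) - hA.eigenvalues i) := by
    ext i j
    by_cases hij : i = j <;>
      simp [Matrix.diagonal, Matrix.one_apply, hij]
  rw [hD, Matrix.star_eq_conjTranspose]
  refine Matrix.PosSemidef.mul_mul_conjTranspose_same ?_ _
  refine Matrix.PosSemidef.diagonal fun i => ?_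
  show (0 : ℂ) ≤ (c : ℂ) - (hA.eigenvalues i : ℂ)
  rw [← Complex.ofReal_sub, Complex.zero_le_real]
  linarith [h i]

lemma schattenNorm_nonneg (p : ℝ) (M : Matrix ι ι ℂ) : 0 ≤ schattenNorm p M := by
  rw [schattenNorm]
  split
  · exact Real.rpow_nonneg (Finset.sum_nonneg fun i _ => Real.rpow_nonneg (abs_nonneg _) _) _
  · exact le_refl 0

lemma schattenNorm_le {A : Matrix ι ι ℂ} (hA : A.IsHermitian) {c p : ℝ} (hp : 1 < p)
    (hc : 0 < c) (h0 : ∀ i, 0 ≤ hA.eigenvalues i) (h1 : ∀ i, hA.eigenvalues i ≤ c)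
    (htr : ∑ i, hA.eigenvalues i = 1) :
    schattenNorm p A ≤ c ^ (1 - 1 / p) := by
  have hp0 : (0:ℝ) < p := by linarith
  rw [schattenNorm, dif_pos hA]
  have hsum : (∑ i, |hA.eigenvalues i| ^ p) ≤ c ^ (p - 1) := by
    calc (∑ i, |hA.eigenvalues i| ^ p) ≤ ∑ i, hA.eigenvalues i * c ^ (p - 1) := by
          refine Finset.sum_le_sum fun i _ => ?_
          rw [abs_of_nonneg (h0 i)]
          rcases eq_or_lt_of_le (h0 i) with h | h
          · rw [← h, Real.zero_rpow (ne_of_gt hp0), zero_mul]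
          · calc (hA.eigenvalues i) ^ p = hA.eigenvalues i * hA.eigenvalues i ^ (p - 1) := by
                  rw [← Real.rpow_one_add' (le_of_lt h) (by linarith)]
                  ring_nf
              _ ≤ hA.eigenvalues i * c ^ (p - 1) := by
                  refine mul_le_mul_of_nonneg_left ?_ (h0 i)
                  exact Real.rpow_le_rpow (le_of_lt h) (h1 i) (by linarith)
      _ = c ^ (p - 1) := by rw [← Finset.sum_mul, htr, one_mul]
  calc (∑ i, |hA.eigenvalues i| ^ p) ^ (1 / p) ≤ (c ^ (p - 1)) ^ (1 / p) := by
        refine Real.rpow_le_rpow ?_ hsum (by positivity)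
        exact Finset.sum_nonneg fun i _ => Real.rpow_nonneg (abs_nonneg _) _
    _ = c ^ (1 - 1 / p) := by
        rw [← Real.rpow_mul (le_of_lt hc)]
        congr 1
        field_simp

lemma le_schattenNorm {A : Matrix ι ι ℂ} (hA : A.IsHermitian) {p : ℝ} (hp : 0 < p) (i : ι) :
    hA.eigenvalues i ≤ schattenNorm p A := by
  rw [schattenNorm, dif_pos hA]
  calc hA.eigenvalues i ≤ |hA.eigenvalues i| := le_abs_self _
    _ = (|hA.eigenvalues i| ^ p) ^ (1 / p) := by
        rw [← Real.rpow_mul (abs_nonneg _), mul_one_div, div_self (ne_of_gt hp), Real.rpow_one]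
    _ ≤ (∑ j, |hA.eigenvalues j| ^ p) ^ (1 / p) := by
        refine Real.rpow_le_rpow (Real.rpow_nonneg (abs_nonneg _) _) ?_ (by positivity)
        exact Finset.single_le_sum (f := fun j => |hA.eigenvalues j| ^ p)
          (fun j _ => Real.rpow_nonneg (abs_nonneg _) _) (Finset.mem_univ i)

lemma posSemidef_sum {α : Type*} (s : Finset α) (f : α → Matrix ι ι ℂ)
    (h : ∀ a ∈ s, (f a).PosSemidef) : (∑ a ∈ s, f a).PosSemidef :=
  Finset.sum_induction f _ (fun _ _ ha hb => ha.add hb) Matrix.PosSemidef.zero h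

lemma posSemidef_real_smul {M : Matrix ι ι ℂ} (hM : M.PosSemidef) {c : ℝ} (hc : 0 ≤ c) :
    ((c : ℂ) • M).PosSemidef := by
  constructor
  · rw [Matrix.IsHermitian, Matrix.conjTranspose_smul, hM.1.eq, Complex.star_def,
      Complex.conj_ofReal]
  · intro x
    exact (hM.smul (Complex.zero_le_real.mpr hc)).2 x

/-- Rayleigh: some eigenvalue is at least the quadratic form value on a unit vector. -/
lemma exists_eigenvalue_ge [Nonempty ι] {A : Matrix ι ι ℂ} (hA : A.IsHermitian) (v : ι → ℂ)
    (hv : dotProduct (star v) v = 1) :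
    ∃ i, Complex.re (dotProduct (star v) (A *ᵥ v)) ≤ hA.eigenvalues i := by
  set U : Matrix ι ι ℂ := (hA.eigenvectorUnitary : Matrix ι ι ℂ) with hUdef
  set x : ι → ℂ := star U *ᵥ v with hx
  have hUU : U * star U = 1 := Matrix.mem_unitaryGroup_iff.mp hA.eigenvectorUnitary.2
  have hform : dotProduct (star v) (A *ᵥ v) =
      ∑ i, (hA.eigenvalues i : ℂ) * (Complex.normSq (x i) : ℂ) := by
    have hsx : star v ᵥ* U = star x := by
      rw [hx, Matrix.star_mulVec, Matrix.star_eq_conjTranspose, Matrix.conjTranspose_conjTranspose]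
    nth_rewrite 1 [hA.spectral_theorem]
    rw [Unitary.conjStarAlgAut_apply, ← Matrix.mulVec_mulVec, ← Matrix.mulVec_mulVec, Matrix.dotProduct_mulVec, hsx, ← hx]
    rw [dotProduct]
    refine Finset.sum_congr rfl fun i _ => ?_
    rw [Matrix.mulVec_diagonal]
    simp only [Pi.star_apply, Function.comp_apply, RCLike.ofReal_alg, Complex.real_smul,
      mul_one, Complex.star_def]
    rw [mul_comm ((starRingEnd ℂ) (x i)), mul_assoc, Complex.mul_conj]
  have hnorm : ∑ i, Complex.normSq (x i) = 1 := by
    have h1 : dotProduct (star x) x = 1 := by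
      have hsx : star v ᵥ* U = star x := by
        rw [hx, Matrix.star_mulVec, Matrix.star_eq_conjTranspose,
          Matrix.conjTranspose_conjTranspose]
      rw [← hsx, hx, ← Matrix.dotProduct_mulVec, Matrix.mulVec_mulVec, hUU, Matrix.one_mulVec, hv]
    have h2 : dotProduct (star x) x = ((∑ i, Complex.normSq (x i) : ℝ) : ℂ) := by
      rw [dotProduct, Complex.ofReal_sum]
      refine Finset.sum_congr rfl fun i _ => ?_
      rw [Pi.star_apply, Complex.star_def, ← Complex.normSq_eq_conj_mul_self]
    rw [h2] at h1
    exact_mod_cast h1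
  obtain ⟨i0, -, hi0⟩ := Finset.exists_max_image Finset.univ hA.eigenvalues
    ⟨Classical.arbitrary ι, Finset.mem_univ _⟩
  refine ⟨i0, ?_⟩
  rw [hform, Complex.re_sum]
  calc ∑ i, ((hA.eigenvalues i : ℂ) * (Complex.normSq (x i) : ℂ)).re
      = ∑ i, hA.eigenvalues i * Complex.normSq (x i) := by
        refine Finset.sum_congr rfl fun i _ => ?_
        rw [← Complex.ofReal_mul, Complex.ofReal_re]
    _ ≤ ∑ i, hA.eigenvalues i0 * Complex.normSq (x i) := by
        refine Finset.sum_le_sum fun i _ => ?_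
        exact mul_le_mul_of_nonneg_right (hi0 i (Finset.mem_univ i)) (Complex.normSq_nonneg _)
    _ = hA.eigenvalues i0 := by rw [← Finset.mul_sum, hnorm, mul_one]

lemma sum_mulVec {α : Type*} (s : Finset α) (f : α → Matrix ι ι ℂ) (v : ι → ℂ) :
    (∑ a ∈ s, f a) *ᵥ v = ∑ a ∈ s, (f a) *ᵥ v := by
  funext k
  simp [Matrix.mulVec, dotProduct, Matrix.sum_apply, Finset.sum_mul]
  rw [Finset.sum_comm]

/-- The output of a random unitary channel on a density operator is a density operator. -/
lemma channel_isDensity {α : Type*} [Fintype α] (hcard : 0 < Fintype.card α)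
    (W : α → Matrix ι ι ℂ) (hW : ∀ a, (W a)ᴴ * W a = 1)
    {ρ : Matrix ι ι ℂ} (hρ : IsDensity ρ) :
    IsDensity (((Fintype.card α : ℕ) : ℂ)⁻¹ • ∑ a, W a * ρ * (W a)ᴴ) := by
  have hcast : ((Fintype.card α : ℕ) : ℂ)⁻¹ = ((((Fintype.card α : ℕ) : ℝ))⁻¹ : ℝ) := by
    push_cast
    rfl
  constructor
  · rw [hcast]
    refine posSemidef_real_smul ?_ (by positivity)
    refine posSemidef_sum _ _ fun a _ => hρ.1.mul_mul_conjTranspose_same (W a)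
  · rw [Matrix.trace_smul, Matrix.trace_sum]
    have : ∀ a : α, (W a * ρ * (W a)ᴴ).trace = 1 := fun a => by
      rw [Matrix.trace_mul_cycle, hW a, one_mul, hρ.2]
    rw [Finset.sum_congr rfl fun a _ => this a]
    have hne : ((Fintype.card α : ℕ) : ℂ) ≠ 0 := by
      exact_mod_cast Nat.cast_ne_zero.mpr (by omega : Fintype.card α ≠ 0)
    simp [Finset.card_univ, smul_eq_mul]
    field_simp


lemma schattenNorm_density_le_one {A : Matrix ι ι ℂ} (hA : IsDensity A) {p : ℝ} (hp : 1 < p) :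
    schattenNorm p A ≤ 1 := by
  have hH : A.IsHermitian := hA.1.isHermitian
  have h0 : ∀ i, 0 ≤ hH.eigenvalues i := fun i => hA.1.eigenvalues_nonneg i
  have htr : ∑ i, hH.eigenvalues i = 1 := sum_eigenvalues_eq_one hH hA.2
  have h1 : ∀ i, hH.eigenvalues i ≤ 1 := fun i => by
    rw [← htr]
    exact Finset.single_le_sum (fun j _ => h0 j) (Finset.mem_univ i)
  simpa using schattenNorm_le hH hp one_pos h0 h1 htr

lemma conjTranspose_transpose_eq_map (A : Matrix ι ι ℂ) :
    (Aᴴ)ᵀ = A.map (starRingEnd ℂ) := by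
  ext i j
  simp [Matrix.conjTranspose_apply]

lemma transpose_eq_conjTranspose_map (A : Matrix ι ι ℂ) :
    Aᵀ = (A.map (starRingEnd ℂ))ᴴ := by
  ext i j
  simp [Matrix.conjTranspose_apply]

lemma isDensity_transpose {ρ : Matrix ι ι ℂ} (h : IsDensity ρ) : IsDensity ρᵀ :=
  ⟨h.1.transpose, by rw [Matrix.trace_transpose, h.2]⟩


lemma vecMulVec_mulVec_eq (u w v : ι → ℂ) :
    (Matrix.vecMulVec u w) *ᵥ v = (dotProduct w v) • u := by
  funext k
  simp [Matrix.mulVec, dotProduct, Matrix.vecMulVec_apply, Finset.mul_sum, mul_assoc,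
    mul_comm]
  refine Finset.sum_congr rfl fun l _ => by ring

/-- The (unnormalized-basis) maximally entangled unit vector. -/
noncomputable def phi (d : ℕ) : Fin d × Fin d → ℂ :=
  fun k => if k.1 = k.2 then (((Real.sqrt d)⁻¹ : ℝ) : ℂ) else 0

lemma phi_dot {d : ℕ} (hd : 0 < d) : dotProduct (star (phi d)) (phi d) = 1 := by
  have hs : ((Real.sqrt d)⁻¹ : ℝ) * ((Real.sqrt d)⁻¹ : ℝ) = (d : ℝ)⁻¹ := by
    rw [← mul_inv, Real.mul_self_sqrt (by positivity)]
  rw [dotProduct]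
  rw [Fintype.sum_prod_type]
  simp only [phi, Pi.star_apply]
  have : ∀ a b : Fin d, star (if a = b then (((Real.sqrt d)⁻¹ : ℝ) : ℂ) else 0) *
      (if a = b then (((Real.sqrt d)⁻¹ : ℝ) : ℂ) else 0)
      = if a = b then (((d : ℝ)⁻¹ : ℝ) : ℂ) else 0 := by
    intro a b
    by_cases hab : a = b <;> simp [hab, Complex.star_def]
    rw [← mul_inv, ← Complex.ofReal_mul, Real.mul_self_sqrt (by positivity),
      Complex.ofReal_natCast]
  simp only [this]
  simp [Finset.sum_ite_eq]
  rw [← Complex.ofReal_natCast, ← Complex.ofReal_inv, ← Complex.ofReal_mul,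
    mul_inv_cancel₀ (by positivity : (0:ℝ) < (d:ℝ)).ne']
  simp

lemma kron_mulVec_phi {d : ℕ} (X Y : Matrix (Fin d) (Fin d) ℂ) (h : X * Yᵀ = 1) :
    (X ⊗ₖ Y) *ᵥ phi d = phi d := by
  funext k
  obtain ⟨a, b⟩ := k
  rw [Matrix.mulVec, dotProduct, Fintype.sum_prod_type]
  simp only [phi, Matrix.kroneckerMap_apply, mul_ite, mul_zero]
  have : ∀ c : Fin d, (∑ e, if c = e then X a c * Y b e * (((Real.sqrt d)⁻¹ : ℝ) : ℂ) else 0)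
      = X a c * Y b c * (((Real.sqrt d)⁻¹ : ℝ) : ℂ) := by
    intro c
    rw [Finset.sum_ite_eq]
    simp
  rw [Finset.sum_congr rfl fun c _ => this c]
  have h2 : (∑ c, X a c * Y b c) = (1 : Matrix (Fin d) (Fin d) ℂ) a b := by
    rw [← h, Matrix.mul_apply]
    exact Finset.sum_congr rfl fun c _ => rfl
  rw [← Finset.sum_mul, h2]
  by_cases hab : a = b <;> simp [Matrix.one_apply, hab]

lemma isDensity_phi {d : ℕ} (hd : 0 < d) :
    IsDensity (Matrix.vecMulVec (phi d) (star (phi d))) := by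
  constructor
  · have hB : Matrix.vecMulVec (phi d) (star (phi d)) =
        (Matrix.of fun (_ : Unit) k => star (phi d k))ᴴ *
          (Matrix.of fun (_ : Unit) k => star (phi d k)) := by
      ext k l
      simp [Matrix.mul_apply, Matrix.vecMulVec_apply, Matrix.conjTranspose_apply]
    rw [hB]
    exact Matrix.posSemidef_conjTranspose_mul_self _
  · rw [Matrix.trace]
    have : ∀ k, (Matrix.vecMulVec (phi d) (star (phi d))).diag k = star (phi d k) * phi d k := by
      intro k
      rw [Matrix.diag_apply, Matrix.vecMulVec_apply, Pi.star_apply, mul_comm]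
    rw [Finset.sum_congr rfl fun k _ => this k]
    exact phi_dot hd


lemma dotProduct_sum' {α : Type*} (s : Finset α) (v : ι → ℂ) (w : α → ι → ℂ) :
    dotProduct v (∑ a ∈ s, w a) = ∑ a ∈ s, dotProduct v (w a) := by
  simp [dotProduct, Finset.mul_sum]
  rw [Finset.sum_comm]

lemma map_conj_transpose (A : Matrix ι ι ℂ) : (A.map (starRingEnd ℂ))ᵀ = Aᴴ := by
  ext i j
  simp [Matrix.conjTranspose_apply]

lemma kron_conjTranspose {κ : Type*} [Fintype κ] [DecidableEq κ]
    (A : Matrix ι ι ℂ) (B : Matrix κ κ ℂ) : (A ⊗ₖ B)ᴴ = Aᴴ ⊗ₖ Bᴴ := by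
  ext ⟨a, b⟩ ⟨c, e⟩
  simp [Matrix.conjTranspose_apply, mul_comm]

end EpsRandAux

open EpsRandAux in
/-- For an ε-randomizing random unitary channel 𝒩 with n unitaries,
0 < ε < 1, and n < d^(2-2/p)/(1+ε)^(2-2/p) for some p > 2, the maximal output
p-norm is strictly supermultiplicative:
ν_p(𝒩)·ν_p(𝒩̄) ≤ ((1+ε)/d)^(2-2/p) < 1/n ≤ ν_p(𝒩 ⊗ 𝒩̄). -/
theorem eps_randomizing_supermultiplicative
    (d n : ℕ) (hd : 0 < d) (hn : 0 < n) (ε p : ℝ) (hε0 : 0 < ε) (hε1 : ε < 1)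
    (hp : 2 < p)
    (V : Fin n → Matrix (Fin d) (Fin d) ℂ)
    (hV : ∀ i, V i ∈ Matrix.unitaryGroup (Fin d) ℂ)
    (N : Matrix (Fin d) (Fin d) ℂ → Matrix (Fin d) (Fin d) ℂ)
    (hN : N = fun ρ => ((n : ℂ))⁻¹ • ∑ i, V i * ρ * (V i)ᴴ)
    (Nbar : Matrix (Fin d) (Fin d) ℂ → Matrix (Fin d) (Fin d) ℂ)
    (hNbar : Nbar = fun ρ => ((n : ℂ))⁻¹ •
      ∑ i, (V i).map (starRingEnd ℂ) * ρ * ((V i).map (starRingEnd ℂ))ᴴ)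
    (Njoint : Matrix (Fin d × Fin d) (Fin d × Fin d) ℂ →
              Matrix (Fin d × Fin d) (Fin d × Fin d) ℂ)
    (hNjoint : Njoint = fun ρ => ((n : ℂ) * (n : ℂ))⁻¹ •
      ∑ i, ∑ j, (V i ⊗ₖ (V j).map (starRingEnd ℂ)) * ρ *
        (V i ⊗ₖ (V j).map (starRingEnd ℂ))ᴴ)
    (hrand : ∀ ρ : Matrix (Fin d) (Fin d) ℂ, IsDensity ρ →
      ∀ (h : (N ρ).IsHermitian) (i : Fin d),
        |h.eigenvalues i - 1 / d| ≤ ε / d)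
    (hsize : (n : ℝ) < (d : ℝ) ^ (2 - 2 / p) / (1 + ε) ^ (2 - 2 / p)) :
    maxOutputPNorm p N * maxOutputPNorm p Nbar ≤ ((1 + ε) / d) ^ (2 - 2 / p) ∧
    ((1 + ε) / d) ^ (2 - 2 / p) < 1 / n ∧
    1 / (n : ℝ) ≤ maxOutputPNorm p Njoint := by
  have hd' : (0:ℝ) < d := by exact_mod_cast hd
  have hn' : (0:ℝ) < n := by exact_mod_cast hn
  have hp0 : (0:ℝ) < p := by linarith
  have hp1 : (1:ℝ) < p := by linarith
  set c : ℝ := (1 + ε) / d with hc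
  have hcpos : 0 < c := by positivity
  -- unitarity facts
  have hVu : ∀ i, (V i)ᴴ * V i = 1 := fun i => by
    rw [← Matrix.star_eq_conjTranspose]
    exact Matrix.mem_unitaryGroup_iff'.mp (hV i)
  have hVu' : ∀ i, V i * (V i)ᴴ = 1 := fun i => by
    rw [← Matrix.star_eq_conjTranspose]
    exact Matrix.mem_unitaryGroup_iff.mp (hV i)
  -- output of N is a density operator
  have hNdens : ∀ ρ, IsDensity ρ → IsDensity (N ρ) := by
    intro ρ hρ
    rw [hN]
    simpa [Fintype.card_fin] using
      channel_isDensity (α := Fin n) (by simpa [Fintype.card_fin] using hn) V hVu hρ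
  -- upper bound for N
  have hboundN : ∀ ρ, IsDensity ρ → schattenNorm p (N ρ) ≤ c ^ (1 - 1/p) := by
    intro ρ hρ
    have hdens := hNdens ρ hρ
    have hH : (N ρ).IsHermitian := hdens.1.isHermitian
    have h0 : ∀ i, 0 ≤ hH.eigenvalues i := fun i => hdens.1.eigenvalues_nonneg i
    have h1 : ∀ i, hH.eigenvalues i ≤ c := by
      intro i
      have := (abs_le.mp (hrand ρ hρ hH i)).2
      rw [hc, add_div]
      linarith
    exact schattenNorm_le hH hp1 hcpos h0 h1 (sum_eigenvalues_eq_one hH hdens.2)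
  -- Nbar is the transpose of N on the transposed input
  have hNbarEq : ∀ ρ : Matrix (Fin d) (Fin d) ℂ, Nbar ρ = (N ρᵀ)ᵀ := by
    intro ρ
    rw [hNbar, hN]
    simp only
    rw [Matrix.transpose_smul, Matrix.transpose_sum]
    congr 1
    refine Finset.sum_congr rfl fun i _ => ?_
    rw [Matrix.transpose_mul, Matrix.transpose_mul, Matrix.transpose_transpose,
      conjTranspose_transpose_eq_map, transpose_eq_conjTranspose_map, ← Matrix.mul_assoc]
  -- upper bound for Nbar
  have hboundNbar : ∀ ρ, IsDensity ρ → schattenNorm p (Nbar ρ) ≤ c ^ (1 - 1/p) := by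
    intro ρ hρ
    have hσ : IsDensity ρᵀ := isDensity_transpose hρ
    have hdens := hNdens _ hσ
    have hMH : (N ρᵀ).IsHermitian := hdens.1.isHermitian
    have hBH : ((N ρᵀ)ᵀ).IsHermitian := hMH.transpose
    have h0 : ∀ i, 0 ≤ hBH.eigenvalues i := fun i =>
      (hdens.1.transpose).eigenvalues_nonneg i
    have h1 : ∀ i, hBH.eigenvalues i ≤ c := by
      have hps : (((c:ℂ)) • (1 : Matrix (Fin d) (Fin d) ℂ) - N ρᵀ).PosSemidef := by
        refine smul_one_sub_posSemidef hMH fun i => ?_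
        have := (abs_le.mp (hrand _ hσ hMH i)).2
        rw [hc, add_div]
        linarith
      have hps' := hps.transpose
      rw [Matrix.transpose_sub, Matrix.transpose_smul, Matrix.transpose_one] at hps'
      exact eigenvalues_le_of_posSemidef hBH hps'
    have htr : ((N ρᵀ)ᵀ).trace = 1 := by rw [Matrix.trace_transpose, hdens.2]
    rw [hNbarEq]
    exact schattenNorm_le hBH hp1 hcpos h0 h1 (sum_eigenvalues_eq_one hBH htr)
  -- sSup bounds
  have hsupN : maxOutputPNorm p N ≤ c ^ (1 - 1/p) := by
    refine Real.sSup_le ?_ (by positivity)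
    rintro x ⟨ρ, hρ, rfl⟩
    exact hboundN ρ hρ
  have hsupNbar : maxOutputPNorm p Nbar ≤ c ^ (1 - 1/p) := by
    refine Real.sSup_le ?_ (by positivity)
    rintro x ⟨ρ, hρ, rfl⟩
    exact hboundNbar ρ hρ
  have hsupNbar0 : 0 ≤ maxOutputPNorm p Nbar := by
    refine Real.sSup_nonneg ?_
    rintro x ⟨ρ, hρ, rfl⟩
    exact schattenNorm_nonneg _ _
  refine ⟨?_, ?_, ?_⟩
  · calc maxOutputPNorm p N * maxOutputPNorm p Nbar
        ≤ c ^ (1 - 1/p) * c ^ (1 - 1/p) :=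
          mul_le_mul hsupN hsupNbar hsupNbar0 (by positivity)
      _ = c ^ (2 - 2/p) := by
          rw [← Real.rpow_add hcpos]
          norm_num
          ring_nf
  · have h1ε : (0:ℝ) < 1 + ε := by linarith
    rw [hc, Real.div_rpow (le_of_lt h1ε) hd'.le]
    rw [div_lt_div_iff₀ (by positivity) hn']
    have := (lt_div_iff₀ (by positivity : (0:ℝ) < (1 + ε) ^ (2 - 2/p))).mp hsize
    linarith
  · -- lower bound for the joint channel
    haveI hdne : Nonempty (Fin d) := ⟨⟨0, hd⟩⟩
    set φ : Fin d × Fin d → ℂ := phi d with hφdef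
    set ρ0 := Matrix.vecMulVec φ (star φ) with hρ0def
    have hρ0 : IsDensity ρ0 := isDensity_phi hd
    set W : Fin n → Fin n → Matrix (Fin d × Fin d) (Fin d × Fin d) ℂ :=
      fun i j => V i ⊗ₖ (V j).map (starRingEnd ℂ) with hWdef
    have hmap : ∀ j, ((V j)ᴴ).map (starRingEnd ℂ) = (V j)ᵀ := fun j => by
      rw [← conjTranspose_transpose_eq_map ((V j)ᴴ), Matrix.conjTranspose_conjTranspose]
    have hWu : ∀ i j, (W i j)ᴴ * W i j = 1 := by
      intro i j
      rw [hWdef]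
      simp only
      have hVbar : ((V j).map (starRingEnd ℂ))ᴴ * (V j).map (starRingEnd ℂ) = 1 := by
        rw [← transpose_eq_conjTranspose_map, ← hmap j, ← Matrix.map_mul, hVu j,
          Matrix.map_one _ (map_zero _) (map_one _)]
      rw [kron_conjTranspose, ← Matrix.mul_kronecker_mul, hVu i, hVbar,
        Matrix.one_kronecker_one]
    have hJdens : ∀ ρ, IsDensity ρ → IsDensity (Njoint ρ) := by
      intro ρ hρ
      rw [hNjoint]
      simp only
      have hre : (∑ i, ∑ j, W i j * ρ * (W i j)ᴴ)
          = ∑ q : Fin n × Fin n, W q.1 q.2 * ρ * (W q.1 q.2)ᴴ := by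
        rw [Fintype.sum_prod_type]
      have hco : ((n : ℂ) * (n : ℂ))⁻¹ = ((Fintype.card (Fin n × Fin n) : ℕ) : ℂ)⁻¹ := by
        rw [Fintype.card_prod, Fintype.card_fin]
        push_cast
        ring
      rw [hco, hre]
      refine channel_isDensity (α := Fin n × Fin n) ?_ _ (fun q => hWu q.1 q.2) hρ
      rw [Fintype.card_prod, Fintype.card_fin]
      positivity
    have hbdd : BddAbove {x | ∃ ρ, IsDensity ρ ∧ x = schattenNorm p (Njoint ρ)} := by
      refine ⟨1, ?_⟩
      rintro x ⟨ρ, hρ, rfl⟩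
      exact schattenNorm_density_le_one (hJdens ρ hρ) hp1
    have hfix : ∀ i, W i i *ᵥ φ = φ := fun i =>
      kron_mulVec_phi _ _ (by rw [map_conj_transpose]; exact hVu' i)
    have hfixH : ∀ i, (W i i)ᴴ *ᵥ φ = φ := by
      intro i
      rw [hWdef]
      simp only
      rw [kron_conjTranspose, ← transpose_eq_conjTranspose_map]
      exact kron_mulVec_phi _ _ (by rw [Matrix.transpose_transpose]; exact hVu i)
    have hq0 : ∀ i j,
        0 ≤ Complex.re (dotProduct (star φ) ((W i j * ρ0 * (W i j)ᴴ) *ᵥ φ)) :=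
      fun i j => (hρ0.1.mul_mul_conjTranspose_same (W i j)).re_dotProduct_nonneg φ
    have hqdiag : ∀ i,
        Complex.re (dotProduct (star φ) ((W i i * ρ0 * (W i i)ᴴ) *ᵥ φ)) = 1 := by
      intro i
      rw [← Matrix.mulVec_mulVec, ← Matrix.mulVec_mulVec, hfixH i, hρ0def, vecMulVec_mulVec_eq,
        phi_dot hd, one_smul, hfix i, phi_dot hd, Complex.one_re]
    have hval : 1 / (n:ℝ) ≤ Complex.re (dotProduct (star φ) (Njoint ρ0 *ᵥ φ)) := by
      rw [hNjoint]
      simp only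
      rw [Matrix.smul_mulVec, dotProduct_smul, smul_eq_mul]
      have hco2 : ((n : ℂ) * (n : ℂ))⁻¹ = ((((n:ℝ) * (n:ℝ))⁻¹ : ℝ) : ℂ) := by
        push_cast
        ring
      rw [hco2, Complex.re_ofReal_mul]
      rw [sum_mulVec, dotProduct_sum', Complex.re_sum]
      have hin : ∀ i,
          Complex.re (dotProduct (star φ) ((∑ j, W i j * ρ0 * (W i j)ᴴ) *ᵥ φ))
          = ∑ j, Complex.re (dotProduct (star φ) ((W i j * ρ0 * (W i j)ᴴ) *ᵥ φ)) := by
        intro i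
        rw [sum_mulVec, dotProduct_sum', Complex.re_sum]
      rw [Finset.sum_congr rfl fun i _ => hin i]
      have hge : (n:ℝ) ≤ ∑ i, ∑ j,
          Complex.re (dotProduct (star φ) ((W i j * ρ0 * (W i j)ᴴ) *ᵥ φ)) := by
        calc (n:ℝ) = ∑ _i : Fin n, (1:ℝ) := by simp
          _ ≤ _ := by
              refine Finset.sum_le_sum fun i _ => ?_
              rw [← hqdiag i]
              exact Finset.single_le_sum (fun j _ => hq0 i j) (Finset.mem_univ i)
      calc 1 / (n:ℝ) = ((n:ℝ) * (n:ℝ))⁻¹ * (n:ℝ) := by field_simp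
        _ ≤ _ := mul_le_mul_of_nonneg_left hge (by positivity)
    obtain ⟨i, hi⟩ := exists_eigenvalue_ge (hJdens ρ0 hρ0).1.isHermitian φ (phi_dot hd)
    calc 1 / (n:ℝ) ≤ Complex.re (dotProduct (star φ) (Njoint ρ0 *ᵥ φ)) := hval
      _ ≤ ((hJdens ρ0 hρ0).1.isHermitian).eigenvalues i := hi
      _ ≤ schattenNorm p (Njoint ρ0) := le_schattenNorm _ hp0 i
      _ ≤ maxOutputPNorm p Njoint := le_csSup hbdd ⟨ρ0, hρ0, rfl⟩
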